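/- With notation as in the monad construction: a matrix A ∈ W* ⊗ ((I₁⊗U) ⊕ (I₂⊗U*)) defines a surjective map of sheaves W⊗O_F → (I₁⊗O_F(1,0)) ⊕ (I₂⊗O_F(0,1)) if and only if Aᵗ is nondegenerate, i.e. there do not exist u₁ ∈ U \ {0}, u₂ ∈ U* \ {0} with u₂(u₁) = 0 such that the induced linear map Aᵗ((-⊗u₁) ⊕ (-⊗u₂)) : I₁* ⊕ I₂* → W fails to be injective. -/
import Mathlib

lemma surj_iff_dual_inj {K W I1 I2 : Type*} [Field K]
    [AddCommGroup W] [Module K W] [AddCommGroup I1] [Module K I1]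
    [AddCommGroup I2] [Module K I2]
    (f1 : W →ₗ[K] I1) (f2 : W →ₗ[K] I2) :
    Function.Surjective (fun w : W => (f1 w, f2 w)) ↔
      Function.Injective (fun φ : Module.Dual K I1 × Module.Dual K I2 =>
        (φ.1.comp f1 + φ.2.comp f2 : Module.Dual K W)) := by
  have h1 : Function.Surjective (fun w : W => (f1 w, f2 w)) ↔
      Function.Surjective (f1.prod f2) := Iff.rfl
  rw [h1, ← LinearMap.dualMap_injective_iff]
  have key : ∀ φ : Module.Dual K I1 × Module.Dual K I2,
      (f1.prod f2).dualMap (Module.dualProdDualEquivDual K I1 I2 φ) =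
        φ.1.comp f1 + φ.2.comp f2 := by
    intro φ; ext w
    simp [Module.dualProdDualEquivDual, LinearMap.coprod_apply]
  constructor
  · intro h φ ψ hφψ
    have := h (a₁ := Module.dualProdDualEquivDual K I1 I2 φ)
      (a₂ := Module.dualProdDualEquivDual K I1 I2 ψ) (by rw [key, key]; exact hφψ)
    exact (Module.dualProdDualEquivDual K I1 I2).injective this
  · intro h x y hxy
    obtain ⟨φ, rfl⟩ := (Module.dualProdDualEquivDual K I1 I2).surjective x
    obtain ⟨ψ, rfl⟩ := (Module.dualProdDualEquivDual K I1 I2).surjective y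
    have : φ = ψ := h (by show φ.1.comp f1 + φ.2.comp f2 = ψ.1.comp f1 + ψ.2.comp f2; rw [← key, ← key]; exact hxy)
    rw [this]

theorem stmt_16 (K : Type*) [Field K] (U W I1 I2 : Type*)
    [AddCommGroup U] [Module K U] [AddCommGroup W] [Module K W]
    [AddCommGroup I1] [Module K I1] [AddCommGroup I2] [Module K I2]
    [FiniteDimensional K U] [FiniteDimensional K W]
    [FiniteDimensional K I1] [FiniteDimensional K I2]
    (hU : Module.finrank K U = 3)
    (Φ1 : U →ₗ[K] W →ₗ[K] I1) (Φ2 : Module.Dual K U →ₗ[K] W →ₗ[K] I2) :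
    (∀ (u1 : U) (u2 : Module.Dual K U), u1 ≠ 0 → u2 ≠ 0 → u2 u1 = 0 →
        Function.Surjective (fun w : W => ((Φ1 u1) w, (Φ2 u2) w))) ↔
      ¬ ∃ (u1 : U) (u2 : Module.Dual K U), u1 ≠ 0 ∧ u2 ≠ 0 ∧ u2 u1 = 0 ∧
        ¬ Function.Injective (fun φ : Module.Dual K I1 × Module.Dual K I2 =>
            (φ.1.comp (Φ1 u1) + φ.2.comp (Φ2 u2) : Module.Dual K W)) := by
  push_neg
  constructor
  · intro h u1 u2 h1 h2 h0
    exact (surj_iff_dual_inj (Φ1 u1) (Φ2 u2)).mp (h u1 u2 h1 h2 h0)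
  · intro h u1 u2 h1 h2 h0
    exact (surj_iff_dual_inj (Φ1 u1) (Φ2 u2)).mpr (h u1 u2 h1 h2 h0)
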